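/- arXiv:2301.09814 — 7 statements merged into one kernel-verified Lean document; each statement's English description precedes it below -/
import Mathlib

section
/- There exists a ZFSet M such that for every ZFSet z, z ∈ M if and only if there is a natural number n with z = powerset^[n] ω. (This is the set {ω, ℘(ω), ℘(℘(ω)), …} whose existence von Neumann proves, in his letter to Fraenkel of 17 June 1927, using the replacement axiom; it is the set whose existence does not follow from Zermelo's original axioms.) -/
/-- The set `{ω, ℘(ω), ℘(℘(ω)), …}` whose existence von Neumann proves, in his letter
to Fraenkel of 17 June 1927, using the replacement axiom. -/
theorem vonNeumann_exists_iterated_powerset_omega :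
    ∃ M : ZFSet, ∀ z : ZFSet, z ∈ M ↔ ∃ n : ℕ, z = ZFSet.powerset^[n] ZFSet.omega := by
  exact ⟨ZFSet.range (fun n : ℕ => ZFSet.powerset^[n] ZFSet.omega), fun z => by
    simp [ZFSet.mem_range, eq_comm, Set.range]⟩
end

section
/- If M and N are Anfänge, then the intersection M ∩ N is an Anfang. -/
/-- The von Neumann natural number `n̄`: `0̄ = ∅`, `(n+1)‾ = n̄⁺ = insert n̄ n̄`. -/
def vN : ℕ → ZFSet
  | 0 => ∅
  | n + 1 => insert (vN n) (vN n)

/-- An *Anfang* in the sense of von Neumann's letter to Fraenkel of 17 June 1927: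
every element `u` of `M` is either the pair `⟨1̄, ω⟩` or of the form `⟨x⁺, ℘(y)⟩`
for some pair `⟨x, y⟩ ∈ M`. -/
def Anfang (M : ZFSet) : Prop :=
  ∀ u ∈ M, u = ZFSet.pair (vN 1) ZFSet.omega ∨
    ∃ x y : ZFSet, ZFSet.pair x y ∈ M ∧ u = ZFSet.pair (insert x x) (ZFSet.powerset y)

lemma succ_inj {x x' : ZFSet} (h : insert x x = insert x' x') : x = x' := by
  have h1 : x ∈ insert x' x' := h ▸ ZFSet.mem_insert_iff.mpr (Or.inl rfl)
  have h2 : x' ∈ insert x x := h ▸ ZFSet.mem_insert_iff.mpr (Or.inl rfl)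
  rcases ZFSet.mem_insert_iff.mp h1 with h1 | h1
  · exact h1
  rcases ZFSet.mem_insert_iff.mp h2 with h2 | h2
  · exact h2.symm
  exact absurd h2 (ZFSet.mem_asymm h1)

lemma pow_inj {y y' : ZFSet} (h : ZFSet.powerset y = ZFSet.powerset y') : y = y' := by
  have h1 : y ∈ ZFSet.powerset y' := h ▸ ZFSet.mem_powerset.mpr (fun z hz => hz)
  have h2 : y' ∈ ZFSet.powerset y := h ▸ ZFSet.mem_powerset.mpr (fun z hz => hz)
  exact ZFSet.ext fun z => ⟨fun hz => ZFSet.mem_powerset.mp h1 hz,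
    fun hz => ZFSet.mem_powerset.mp h2 hz⟩

/-- The intersection of two Anfänge is an Anfang. -/
theorem Anfang.inter {M N : ZFSet} (hM : Anfang M) (hN : Anfang N) :
    Anfang (M ∩ N) := by
  intro u hu
  rw [ZFSet.mem_inter] at hu
  rcases hM u hu.1 with h | ⟨x, y, hxy, rfl⟩
  · exact Or.inl h
  rcases hN _ hu.2 with h | ⟨x', y', hxy', heq⟩
  · exact Or.inl h
  obtain ⟨hx, hy⟩ := ZFSet.pair_injective heq
  obtain rfl : x = x' := succ_inj hx
  obtain rfl : y = y' := pow_inj hy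
  exact Or.inr ⟨x, y, ZFSet.mem_inter.mpr ⟨hxy, hxy'⟩, rfl⟩
end

section
/- For every ZFSet u there exists a ZFSet H whose elements are exactly those Anfänge M such that u ∈ M and no Anfang that is a proper subset of M contains u. (The set h(u) of von Neumann's letter of 17 June 1927.) -/
theorem max_add' (a b c : Ordinal) : max (a + c) (b + c) = max a b + c :=
  (Monotone.map_max (f := (· + c)) (fun _ _ h => add_le_add_left h c)).symm

theorem rank_pair' (x y : ZFSet) :
    ZFSet.rank (ZFSet.pair x y) = max (ZFSet.rank x) (ZFSet.rank y) + 2 := by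
  rw [ZFSet.pair, ZFSet.rank_pair, ZFSet.rank_singleton, ZFSet.rank_pair]
  simp only [Order.succ_eq_add_one]
  rw [max_add' (ZFSet.rank x) (ZFSet.rank y) 1,
    show ZFSet.rank x + 1 + 1 = ZFSet.rank x + 2 by rw [add_assoc]; norm_num,
    show max (ZFSet.rank x) (ZFSet.rank y) + 1 + 1
      = max (ZFSet.rank x) (ZFSet.rank y) + 2 by rw [add_assoc]; norm_num,
    max_add' (ZFSet.rank x) (max (ZFSet.rank x) (ZFSet.rank y)) 2,
    ← max_assoc, max_self]

theorem mem_anfang_form {M : ZFSet} (hM : Anfang M) :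
    ∀ u ∈ M, ∃ n : ℕ, u = ZFSet.pair (vN (n + 1)) (ZFSet.powerset^[n] ZFSet.omega) := by
  suffices h : ∀ o : Ordinal, ∀ u ∈ M, ZFSet.rank u = o →
      ∃ n : ℕ, u = ZFSet.pair (vN (n + 1)) (ZFSet.powerset^[n] ZFSet.omega) by
    intro u hu; exact h _ u hu rfl
  intro o
  induction o using Ordinal.induction with
  | h o ih =>
    intro v hv hr
    rcases hM v hv with h1 | ⟨x, y, hxy, rfl⟩
    · exact ⟨0, h1⟩
    · have hlt : ZFSet.rank (ZFSet.pair x y) < o := by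
        rw [← hr, rank_pair' x y, rank_pair' (insert x x) (ZFSet.powerset y),
          ZFSet.rank_insert, ZFSet.rank_powerset,
          max_eq_left (Order.le_succ _), Order.succ_eq_add_one, Order.succ_eq_add_one,
          max_add' (ZFSet.rank x) (ZFSet.rank y) 1, add_assoc]
        exact add_lt_add_right (by exact_mod_cast (by norm_num : (2:ℕ) < 1 + 2)) _
      obtain ⟨n, hn⟩ := ih _ hlt (ZFSet.pair x y) hxy rfl
      obtain ⟨hx, hy⟩ := ZFSet.pair_injective hn
      refine ⟨n + 1, ?_⟩
      rw [hx, hy, Function.iterate_succ_apply']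
      rfl

/-- The set `h(u)` of von Neumann's letter of 17 June 1927: the set of all Anfänge `M`
containing `u` such that no Anfang that is a proper subset of `M` contains `u`. -/
theorem exists_h_of_minimal_Anfaenge (u : ZFSet) :
    ∃ H : ZFSet, ∀ M : ZFSet,
      M ∈ H ↔ Anfang M ∧ u ∈ M ∧
        ¬ ∃ M' : ZFSet, Anfang M' ∧ M' ⊆ M ∧ M' ≠ M ∧ u ∈ M' := by
  classical
  set S : type_of% u := ZFSet.range (fun n : ℕ =>
    ZFSet.pair (vN (n + 1)) (ZFSet.powerset^[n] ZFSet.omega)) with hS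
  refine ⟨(ZFSet.powerset S).sep (fun M => Anfang M ∧ u ∈ M ∧
      ¬ ∃ M' : ZFSet, Anfang M' ∧ M' ⊆ M ∧ M' ≠ M ∧ u ∈ M'), fun M => ?_⟩
  rw [ZFSet.mem_sep, ZFSet.mem_powerset]
  constructor
  · rintro ⟨_, h⟩; exact h
  · rintro ⟨hA, hu, hmin⟩
    refine ⟨fun v hv => ?_, hA, hu, hmin⟩
    obtain ⟨n, rfl⟩ := mem_anfang_form hA v hv
    rw [hS, ZFSet.mem_range]
    exact ⟨n, rfl⟩
end

section
/- For every natural number n there exists an Anfang M with pair (n+1)‾ (powerset^[n] ω) ∈ M. (Von Neumann's induction claim that for every positive integer x there is an Anfang containing an element with first coordinate x, whose second coordinate is the x-fold iterated power set of ω.) -/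
/-- For every natural number `n` there is an Anfang containing the pair
`⟨(n+1)‾, ℘^[n](ω)⟩`. -/
theorem exists_Anfang_containing (n : ℕ) :
    ∃ M : ZFSet, Anfang M ∧
      ZFSet.pair (vN (n + 1)) (ZFSet.powerset^[n] ZFSet.omega) ∈ M := by
  induction n with
  | zero =>
    refine ⟨{ZFSet.pair (vN 1) ZFSet.omega}, ?_, ZFSet.mem_singleton.2 rfl⟩
    intro u hu
    exact Or.inl (ZFSet.mem_singleton.1 hu)
  | succ n ih =>
    obtain ⟨M, hM, hmem⟩ := ih
    refine ⟨insert (ZFSet.pair (vN (n + 2)) (ZFSet.powerset^[n + 1] ZFSet.omega)) M,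
      ?_, ZFSet.mem_insert_iff.2 (Or.inl rfl)⟩
    intro u hu
    rcases ZFSet.mem_insert_iff.1 hu with h | h
    · right
      refine ⟨vN (n + 1), ZFSet.powerset^[n] ZFSet.omega,
        ZFSet.mem_insert_iff.2 (Or.inr hmem), ?_⟩
      rw [h, Function.iterate_succ_apply']
      rfl
    · rcases hM u h with h1 | ⟨x, y, hxy, hu'⟩
      · exact Or.inl h1
      · exact Or.inr ⟨x, y, ZFSet.mem_insert_iff.2 (Or.inr hxy), hu'⟩
end

section
/- If M is an Anfang and u ∈ M, then there exists a natural number n such that u = pair (n+1)‾ (powerset^[n] ω). (Every element of an Anfang is a pair whose first coordinate is a positive von Neumann natural number n+1 and whose second coordinate is the n-fold iterated power set of ω; the proof uses the well-foundedness of membership.) -/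
private lemma rank_pair_lt (x y : ZFSet) :
    ZFSet.rank (ZFSet.pair x y) <
      ZFSet.rank (ZFSet.pair (insert x x) (ZFSet.powerset y)) := by
  have hx : ZFSet.rank (insert x x) = Order.succ (ZFSet.rank x) := by
    rw [ZFSet.rank_insert, max_eq_left (Order.le_succ _)]
  simp only [ZFSet.pair, ZFSet.rank_insert, ZFSet.rank_singleton, ZFSet.rank_powerset, hx,
    ← succ_max, max_self, max_left_comm, max_assoc]
  exact Order.lt_succ _

/-- Every element of an Anfang is of the form `⟨(n+1)‾, ℘^[n](ω)⟩` for some `n : ℕ`. -/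
theorem Anfang.mem_eq {M u : ZFSet} (hM : Anfang M) (hu : u ∈ M) :
    ∃ n : ℕ, u = ZFSet.pair (vN (n + 1)) (ZFSet.powerset^[n] ZFSet.omega) := by
  have key : ∀ o : Ordinal, ∀ u : ZFSet, ZFSet.rank u = o → u ∈ M →
      ∃ n : ℕ, u = ZFSet.pair (vN (n + 1)) (ZFSet.powerset^[n] ZFSet.omega) := by
    intro o
    induction o using Ordinal.induction with
    | h o IH =>
      intro u hrank hu
      rcases hM u hu with h | ⟨x, y, hxy, rfl⟩
      · exact ⟨0, by simpa using h⟩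
      · obtain ⟨m, hm⟩ := IH (ZFSet.rank (ZFSet.pair x y))
          (hrank ▸ rank_pair_lt x y) _ rfl hxy
        obtain ⟨hx, hy⟩ := ZFSet.pair_injective hm
        refine ⟨m + 1, ?_⟩
        rw [hx, hy]
        congr 1
        rw [Function.iterate_succ_apply']
  exact key _ u rfl hu
end

section
/- (Definition by transfinite induction, in the widest form stated in von Neumann's letter of 26 October 1923.) For every function a : ZFSet → ZFSet there exists exactly one function b : ZFSet → ZFSet with the following two properties: (1) b x = ∅ whenever x is not an ordinal; (2) for every ordinal x there exists a ZFSet r whose elements are exactly the pairs pair y (b y) with y ∈ x, and b x = a (pair x r). -/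
open scoped Classical

/-- A ZF set is an ordinal in von Neumann's sense if it is transitive and every element
of it is transitive. -/
def VNOrdinal (x : ZFSet) : Prop :=
  (∀ y ∈ x, y ⊆ x) ∧ ∀ y ∈ x, ∀ z ∈ y, z ⊆ y

noncomputable instance instAllDef (f : ZFSet → ZFSet) : ZFSet.Definable₁ f where
  out xs := (f (.mk (xs 0))).out
  mk_out xs := by simp

/-- The recursively defined function. -/
noncomputable def vnRec (a : ZFSet → ZFSet) : ZFSet → ZFSet :=
  ZFSet.mem_wf.fix fun x IH =>
    if _h : VNOrdinal x then
      a (ZFSet.pair x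
        (@ZFSet.image (fun y => ZFSet.pair y (if hy : y ∈ x then IH y hy else ∅))
          (instAllDef _) x))
    else ∅

theorem vnRec_eq (a : ZFSet → ZFSet) (x : ZFSet) :
    vnRec a x =
      if _h : VNOrdinal x then
        a (ZFSet.pair x (ZFSet.image (fun y => ZFSet.pair y (vnRec a y)) x))
      else ∅ := by
  rw [vnRec, WellFounded.fix_eq]
  split
  · congr 2
    apply ZFSet.ext
    intro w
    simp only [ZFSet.mem_image]
    constructor
    · rintro ⟨y, hy, rfl⟩
      exact ⟨y, hy, by rw [dif_pos hy]⟩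
    · rintro ⟨y, hy, rfl⟩
      exact ⟨y, hy, by rw [dif_pos hy]⟩
  · rfl

/-- Definition by transfinite induction, in the widest form stated in von Neumann's
letter of 26 October 1923: for every `a` there is exactly one `b` with `b x = ∅` for
non-ordinals `x`, and `b x = a ⟨x, b↾x⟩` for ordinals `x`. -/
theorem transfinite_recursion_unique (a : ZFSet → ZFSet) :
    ∃! b : ZFSet → ZFSet,
      (∀ x : ZFSet, ¬ VNOrdinal x → b x = ∅) ∧
      (∀ x : ZFSet, VNOrdinal x →
        ∃ r : ZFSet, (∀ w : ZFSet, w ∈ r ↔ ∃ y ∈ x, w = ZFSet.pair y (b y)) ∧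
          b x = a (ZFSet.pair x r)) := by
  refine ⟨vnRec a, ⟨?_, ?_⟩, ?_⟩
  · intro x hx
    rw [vnRec_eq, dif_neg hx]
  · intro x hx
    refine ⟨ZFSet.image (fun y => ZFSet.pair y (vnRec a y)) x, ?_, ?_⟩
    · intro w
      simp only [ZFSet.mem_image]
      constructor
      · rintro ⟨y, hy, rfl⟩; exact ⟨y, hy, rfl⟩
      · rintro ⟨y, hy, rfl⟩; exact ⟨y, hy, rfl⟩
    · rw [vnRec_eq, dif_pos hx]
  · intro b ⟨hb1, hb2⟩
    funext x
    induction x using ZFSet.mem_wf.induction with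
    | _ x IH =>
      by_cases hx : VNOrdinal x
      · obtain ⟨r, hr, hbr⟩ := hb2 x hx
        rw [hbr, vnRec_eq, dif_pos hx]
        congr 2
        apply ZFSet.ext
        intro w
        simp only [hr, ZFSet.mem_image]
        constructor
        · rintro ⟨y, hy, rfl⟩; exact ⟨y, hy, by rw [IH y hy]⟩
        · rintro ⟨y, hy, rfl⟩; exact ⟨y, hy, by rw [IH y hy]⟩
      · rw [hb1 x hx, vnRec_eq, dif_neg hx]
end

section
/- (Comparability of ordinals, underlying von Neumann's requirement that 'die Vergleichbarkeit nachgewiesen werde'.) If o and o' are ordinals, then o ∈ o', or o = o', or o' ∈ o. -/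
theorem VNOrdinal.mem {x y : ZFSet} (h : VNOrdinal x) (hy : y ∈ x) : VNOrdinal y :=
  ⟨h.2 y hy, fun z hz => h.2 z (h.1 y hy hz)⟩

/-- Comparability of von Neumann ordinals. -/
theorem VNOrdinal.trichotomy {o o' : ZFSet} (h : VNOrdinal o) (h' : VNOrdinal o') :
    o ∈ o' ∨ o = o' ∨ o' ∈ o := by
  induction o using (inferInstance : IsWellFounded ZFSet (· ∈ ·)).wf.induction generalizing o' with
  | _ a IH1 =>
  induction o' using (inferInstance : IsWellFounded ZFSet (· ∈ ·)).wf.induction with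
  | _ b IH2 =>
  by_contra hc
  push_neg at hc
  obtain ⟨hab, hne, hba⟩ := hc
  apply hne
  apply ZFSet.ext
  intro z
  constructor
  · intro hz
    rcases IH1 z hz (h.mem hz) h' with h1 | h1 | h1
    · exact h1
    · exact absurd (h1 ▸ hz) hba
    · exact absurd (h.1 z hz h1) hba
  · intro hz
    rcases IH2 z hz (h'.mem hz) with h1 | h1 | h1
    · exact absurd (h'.1 z hz h1) hab
    · exact absurd (h1 ▸ hz) hab
    · exact h1
end
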